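/- Let n ≥ 2, let a > 0, b ∈ ℝ, t_1 < t_2 < … < t_{n-1} be reals, s_1, …, s_{n-1} > 0, and ζ_1, …, ζ_{n-1} ∈ ℍ. Define g(x) = ax + b - ∑_{k=1}^{n-1} s_k/(x - t_k), S(x) = ∏_{k=1}^{n-1} (x - t_k), and P(x) = ∏_{j=1}^{n-1} (x - ζ_j)(x - conj(ζ_j)). Then the following are equivalent: (i) S(x)²·g'(x) = a·P(x) for all real x distinct from t_1, …, t_{n-1} (i.e., g has critical points precisely ζ_1, …, ζ_{n-1} and their conjugates, with multiplicity); (ii) there exists a real polynomial R̃ of exact degree 2n-4 such that P·S'' - P'·S' + R̃·S = 0 and s_k = a·P(t_k)/∏_{j≠k}(t_k - t_j)² for every k = 1, …, n-1. -/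

import Mathlib

open Polynomial Finset Complex ComplexConjugate

private lemma sq_X_sub_C_dvd {p : Polynomial ℝ} {c : ℝ} (h1 : p.IsRoot c)
    (h2 : (Polynomial.derivative p).IsRoot c) : (X - Polynomial.C c) ^ 2 ∣ p := by
  obtain ⟨q, hq⟩ := Polynomial.dvd_iff_isRoot.2 h1
  have h3 := h2
  rw [hq, derivative_mul, derivative_sub, derivative_X, derivative_C, sub_zero, one_mul] at h3
  have hq2 : q.IsRoot c := by
    simpa [Polynomial.IsRoot, Polynomial.eval_add, Polynomial.eval_mul] using h3
  obtain ⟨r, hr⟩ := Polynomial.dvd_iff_isRoot.2 hq2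
  exact ⟨r, by rw [hq, hr]; ring⟩

/-- **Lemma 4.** Let `g(x) = a·x + b - ∑ s k/(x - t k)` with `a > 0`, ordered real poles
`t 1 < … < t (n-1)` and positive residues, let `S(x) = ∏ (x - t k)`, and let `P` be the
real polynomial with complex factorization `P(x) = ∏ (x - ζ j)(x - conj (ζ j))`, where
the `ζ j` lie in the upper half-plane. Then `g` has critical points precisely the `ζ j`
and their conjugates (i.e. `S(x)²·g'(x) = a·P(x)` off the poles) if and only if there is
a real polynomial `R̃` of exact degree `2n-4` with `P·S'' - P'·S' + R̃·S = 0` and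
`s k = a·P(t k)/∏_{j≠k}(t k - t j)²` for all `k`. -/
theorem critical_points_iff_van_vleck'
    (n : ℕ) (hn : 2 ≤ n) (a b : ℝ) (ha : 0 < a)
    (t : Fin (n - 1) → ℝ) (ht : StrictMono t)
    (s : Fin (n - 1) → ℝ) (hs : ∀ k, 0 < s k)
    (ζ : Fin (n - 1) → ℂ) (hζ : ∀ j, 0 < (ζ j).im)
    (g : ℝ → ℝ) (hg : g = fun u => a * u + b - ∑ k, s k / (u - t k))
    (S : Polynomial ℝ) (hS : S = ∏ k, (X - C (t k)))
    (P : Polynomial ℝ)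
    (hP : P.map (algebraMap ℝ ℂ) = ∏ j, (X - C (ζ j)) * (X - C (conj (ζ j)))) :
    (∀ u : ℝ, (∀ k, u ≠ t k) →
        (S.eval u) ^ 2 * deriv g u = a * P.eval u)
    ↔
    (∃ R : Polynomial ℝ, R.degree = (2 * n - 4 : ℕ) ∧
      P * derivative (derivative S) - derivative P * derivative S + R * S = 0 ∧
      ∀ k, s k = a * P.eval (t k) / ∏ j ∈ Finset.univ.erase k, (t k - t j) ^ 2) := by
  obtain ⟨m, rfl⟩ : ∃ m, n = m + 2 := ⟨n - 2, by omega⟩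
  classical
  have ha' : a ≠ 0 := ne_of_gt ha
  have hinj : Function.Injective t := ht.injective
  set Sk : Fin (m + 2 - 1) → Polynomial ℝ :=
    fun k => ∏ j ∈ Finset.univ.erase k, (X - C (t j)) with hSk
  -- basic facts about S and Sk
  have hSfac : ∀ k, S = (X - C (t k)) * Sk k := by
    intro k
    rw [hS, hSk]
    exact (Finset.mul_prod_erase _ _ (Finset.mem_univ k)).symm
  have hSkev : ∀ k, (Sk k).eval (t k) = ∏ j ∈ Finset.univ.erase k, (t k - t j) := by
    intro k
    simp only [hSk, eval_prod, eval_sub, eval_X, eval_C]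
  have hprodne : ∀ k, (∏ j ∈ Finset.univ.erase k, (t k - t j)) ≠ 0 := by
    intro k
    refine Finset.prod_ne_zero_iff.2 fun j hj h => ?_
    exact (Finset.mem_erase.1 hj).1 ((hinj (sub_eq_zero.1 h)).symm)
  have hSkne : ∀ k, (Sk k).eval (t k) ≠ 0 := fun k => by
    rw [hSkev k]; exact hprodne k
  have hpp : ∀ k, ((Sk k).eval (t k)) ^ 2 = ∏ j ∈ Finset.univ.erase k, (t k - t j) ^ 2 := by
    intro k; rw [hSkev k, Finset.prod_pow]
  have hprodsqne : ∀ k, (∏ j ∈ Finset.univ.erase k, (t k - t j) ^ 2) ≠ 0 := by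
    intro k; rw [Finset.prod_pow]; exact pow_ne_zero 2 (hprodne k)
  have hSkev0 : ∀ j k : Fin (m + 2 - 1), j ≠ k → (Sk j).eval (t k) = 0 := by
    intro j k hjk
    simp only [hSk, eval_prod, eval_sub, eval_X, eval_C]
    exact Finset.prod_eq_zero (Finset.mem_erase.2 ⟨Ne.symm hjk, Finset.mem_univ k⟩) (sub_self _)
  have hSev : ∀ k, S.eval (t k) = 0 := by
    intro k; rw [hSfac k]; simp
  have hS'fac : ∀ k, derivative S = Sk k + (X - C (t k)) * derivative (Sk k) := by
    intro k
    rw [hSfac k, derivative_mul, derivative_sub, derivative_X, derivative_C, sub_zero, one_mul]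
  have hS'ev : ∀ k, (derivative S).eval (t k) = (Sk k).eval (t k) := by
    intro k; rw [hS'fac k]; simp
  have hS''ev : ∀ k, (derivative (derivative S)).eval (t k)
      = 2 * (derivative (Sk k)).eval (t k) := by
    intro k
    rw [hS'fac k, derivative_add, derivative_mul, derivative_sub, derivative_X, derivative_C,
      sub_zero, one_mul]
    simp only [eval_add, eval_mul, eval_sub, eval_X, eval_C, sub_self, zero_mul, add_zero]
    ring
  have hSm : S.Monic := by
    rw [hS]; exact monic_prod_of_monic _ _ fun k _ => monic_X_sub_C _
  have hSdeg : S.natDegree = m + 1 := by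
    rw [hS, natDegree_prod_of_monic _ _ fun k _ => monic_X_sub_C _]
    simp [natDegree_X_sub_C]
  have hSkm : ∀ k, (Sk k).Monic := by
    intro k; rw [hSk]; exact monic_prod_of_monic _ _ fun j _ => monic_X_sub_C _
  have hSkdeg : ∀ k, (Sk k).natDegree = m := by
    intro k
    rw [hSk, natDegree_prod_of_monic _ _ fun j _ => monic_X_sub_C _]
    simp [natDegree_X_sub_C, Finset.card_erase_of_mem]
  -- facts about P
  have hPm : P.Monic := by
    refine ((algebraMap ℝ ℂ).injective.monic_map_iff).2 ?_
    rw [hP]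
    exact monic_prod_of_monic _ _ fun j _ => (monic_X_sub_C _).mul (monic_X_sub_C _)
  have hmapdeg : (P.map (algebraMap ℝ ℂ)).natDegree = 2 * m + 2 := by
    rw [hP, natDegree_prod_of_monic _ _ fun j _ => (monic_X_sub_C _).mul (monic_X_sub_C _)]
    have h2 : ∀ j : Fin (m + 2 - 1), ((X - C (ζ j)) * (X - C (conj (ζ j)))).natDegree = 2 := by
      intro j
      rw [(monic_X_sub_C _).natDegree_mul (monic_X_sub_C _), natDegree_X_sub_C, natDegree_X_sub_C]
    simp only [h2, Finset.sum_const, Finset.card_univ, Fintype.card_fin, smul_eq_mul]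
    omega
  have hPdeg : P.natDegree = 2 * m + 2 := by
    rw [← natDegree_map_eq_of_injective (algebraMap ℝ ℂ).injective P]
    exact hmapdeg
  -- the key polynomial E
  set E : Polynomial ℝ := C a * P - C a * S ^ 2 - ∑ k, C (s k) * (Sk k) ^ 2 with hEdef
  have hEev : ∀ u : ℝ, E.eval u
      = a * P.eval u - a * (S.eval u) ^ 2 - ∑ k, s k * ((Sk k).eval u) ^ 2 := by
    intro u
    simp only [hEdef, eval_sub, eval_mul, eval_C, eval_pow, eval_finset_sum]
  have hEevk : ∀ k, E.eval (t k) = a * P.eval (t k) - s k * ((Sk k).eval (t k)) ^ 2 := by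
    intro k
    rw [hEev (t k), hSev k,
      Finset.sum_eq_single k (fun j _ hjk => by rw [hSkev0 j k hjk]; ring)
        (fun h => absurd (Finset.mem_univ k) h)]
    ring
  have hEder : derivative E = C a * derivative P - C a * (C 2 * S * derivative S)
      - ∑ k, C (s k) * (C 2 * Sk k * derivative (Sk k)) := by
    rw [hEdef, derivative_sub, derivative_sub, derivative_C_mul, derivative_C_mul, derivative_sq,
      derivative_sum]
    congr 1
    exact Finset.sum_congr rfl fun k _ => by rw [derivative_C_mul, derivative_sq]
  have hE'evk : ∀ k, (derivative E).eval (t k)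
      = a * (derivative P).eval (t k)
        - 2 * s k * (Sk k).eval (t k) * (derivative (Sk k)).eval (t k) := by
    intro k
    rw [hEder]
    simp only [eval_sub, eval_mul, eval_C, eval_finset_sum]
    rw [hSev k,
      Finset.sum_eq_single k (fun j _ hjk => by rw [hSkev0 j k hjk]; ring)
        (fun h => absurd (Finset.mem_univ k) h)]
    ring
  -- derivative of g off the poles
  have hderiv : ∀ u : ℝ, (∀ k, u ≠ t k) → deriv g u = a + ∑ k, s k / (u - t k) ^ 2 := by
    intro u hu
    have h1 : HasDerivAt (fun x : ℝ => a * x + b) (a * 1) u :=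
      ((hasDerivAt_id u).const_mul a).add_const b
    have h2 : HasDerivAt (fun x : ℝ => ∑ k, s k / (x - t k))
        (∑ k, (0 * (u - t k) - s k * 1) / (u - t k) ^ 2) u := by
      apply HasDerivAt.fun_sum
      intro k _
      exact (hasDerivAt_const u (s k)).div ((hasDerivAt_id u).sub_const (t k))
        (sub_ne_zero.2 (hu k))
    have h3 := h1.sub h2
    have h4 : deriv g u = a * 1 - ∑ k, (0 * (u - t k) - s k * 1) / (u - t k) ^ 2 := by
      rw [hg]; exact h3.deriv
    rw [h4, mul_one]
    simp only [zero_mul, mul_one, zero_sub, neg_div]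
    rw [Finset.sum_neg_distrib, sub_neg_eq_add]
  -- key algebraic identity
  have key : ∀ u : ℝ, (∀ k, u ≠ t k) → (S.eval u) ^ 2 * deriv g u
      = a * (S.eval u) ^ 2 + ∑ k, s k * ((Sk k).eval u) ^ 2 := by
    intro u hu
    rw [hderiv u hu, mul_add, Finset.mul_sum, mul_comm ((S.eval u) ^ 2) a]
    congr 1
    refine Finset.sum_congr rfl fun k _ => ?_
    have h1 : u - t k ≠ 0 := sub_ne_zero.2 (hu k)
    have h2 : S.eval u = (u - t k) * (Sk k).eval u := by rw [hSfac k]; simp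
    rw [h2, mul_pow]
    field_simp
  -- step 1 : analytic condition ↔ E = 0
  set D : Polynomial ℝ := P * derivative (derivative S) - derivative P * derivative S with hD
  have step1 : (∀ u : ℝ, (∀ k, u ≠ t k) → (S.eval u) ^ 2 * deriv g u = a * P.eval u)
      ↔ E = 0 := by
    constructor
    · intro h
      apply Polynomial.eq_zero_of_infinite_isRoot
      have hset : {x : ℝ | ∀ k, x ≠ t k}.Infinite := by
        have he : {x : ℝ | ∀ k, x ≠ t k} = (Set.range t)ᶜ := by
          ext x
          simp only [Set.mem_setOf_eq, Set.mem_compl_iff, Set.mem_range, not_exists]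
          exact ⟨fun h' k hk => h' k hk.symm, fun h' k hk => h' k hk.symm⟩
        rw [he]
        exact (Set.finite_range t).infinite_compl
      refine hset.mono fun x hx => ?_
      have hx' := h x hx
      rw [key x hx] at hx'
      show E.eval x = 0
      rw [hEev x]
      linarith
    · intro h u hu
      have h0 : E.eval u = 0 := by rw [h]; simp
      rw [hEev u] at h0
      rw [key u hu]
      linarith
  rw [step1]
  constructor
  · -- forward: E = 0 gives the Van Vleck data
    intro hE0
    have hPk : ∀ k, a * P.eval (t k) = s k * ((Sk k).eval (t k)) ^ 2 := by
      intro k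
      have h0 : E.eval (t k) = 0 := by rw [hE0]; simp
      rw [hEevk k] at h0
      linarith
    have hP'rel : ∀ k, a * (derivative P).eval (t k)
        = 2 * s k * (Sk k).eval (t k) * (derivative (Sk k)).eval (t k) := by
      intro k
      have h0 : (derivative E).eval (t k) = 0 := by rw [hE0]; simp
      rw [hE'evk k] at h0
      linarith
    have hskf : ∀ k, s k = a * P.eval (t k) / ∏ j ∈ Finset.univ.erase k, (t k - t j) ^ 2 := by
      intro k
      have h0 := hPk k
      rw [hpp k] at h0
      rw [h0, mul_div_cancel_right₀ _ (hprodsqne k)]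
    have hDroot : ∀ k, D.IsRoot (t k) := by
      intro k
      have h3 : a * D.eval (t k) = 0 := by
        simp only [hD, eval_sub, eval_mul]
        rw [hS''ev k, hS'ev k]
        linear_combination (2 * (derivative (Sk k)).eval (t k)) * hPk k
          - ((Sk k).eval (t k)) * hP'rel k
      rcases mul_eq_zero.1 h3 with h | h
      · exact absurd h ha'
      · exact h
    have hSdvd : S ∣ D := by
      rw [hS]
      refine Finset.prod_dvd_of_coprime ((pairwise_coprime_X_sub_C hinj).set_pairwise _)
        fun k _ => dvd_iff_isRoot.2 (hDroot k)
    -- degree facts for D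
    have hPc : P.coeff (2 * m + 2) = 1 := by
      have := hPm.coeff_natDegree; rwa [hPdeg] at this
    have hSc : S.coeff (m + 1) = 1 := by
      have := hSm.coeff_natDegree; rwa [hSdeg] at this
    have hS'c : (derivative S).coeff m = (m : ℝ) + 1 := by
      rw [coeff_derivative, hSc, one_mul]
    have hP'c : (derivative P).coeff (2 * m + 1) = 2 * (m : ℝ) + 2 := by
      rw [coeff_derivative]
      have e : 2 * m + 1 + 1 = 2 * m + 2 := by omega
      rw [e, hPc, one_mul]
      push_cast; ring
    have hS'le : (derivative S).natDegree ≤ m := by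
      have := natDegree_derivative_le S
      rw [hSdeg] at this
      omega
    have hS''le : (derivative (derivative S)).natDegree ≤ m - 1 :=
      le_trans (natDegree_derivative_le _) (Nat.sub_le_sub_right hS'le 1)
    have hP'le : (derivative P).natDegree ≤ 2 * m + 1 := by
      have := natDegree_derivative_le P
      rw [hPdeg] at this
      omega
    have hc2 : (derivative P * derivative S).coeff (3 * m + 1)
        = (2 * (m : ℝ) + 2) * ((m : ℝ) + 1) := by
      have h := coeff_mul_add_eq_of_natDegree_le hP'le hS'le
      have e : 2 * m + 1 + m = 3 * m + 1 := by omega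
      rw [e] at h
      rw [h, hP'c, hS'c]
    have hle2 : (derivative P * derivative S).natDegree ≤ 3 * m + 1 :=
      le_trans natDegree_mul_le (by omega)
    have hDfacts : D.natDegree ≤ 3 * m + 1 ∧
        D.coeff (3 * m + 1) = ((m : ℝ) + 1) * (m : ℝ) - (2 * (m : ℝ) + 2) * ((m : ℝ) + 1) := by
      rcases Nat.eq_zero_or_pos m with hm0 | hm1
      · have hS'0 : derivative S = C ((derivative S).coeff 0) :=
          eq_C_of_natDegree_le_zero (by omega)
        have hS''0 : derivative (derivative S) = 0 := by
          rw [hS'0, derivative_C]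
        constructor
        · rw [hD, hS''0, mul_zero, zero_sub, natDegree_neg]
          exact hle2
        · rw [hD, hS''0, mul_zero, zero_sub, coeff_neg, hc2, hm0]
          push_cast; ring
      · have hS''c : (derivative (derivative S)).coeff (m - 1) = ((m : ℝ) + 1) * (m : ℝ) := by
          rw [coeff_derivative]
          have e : m - 1 + 1 = m := by omega
          rw [e, hS'c]
          have e2 : ((m - 1 : ℕ) : ℝ) = (m : ℝ) - 1 := by
            push_cast [Nat.cast_sub hm1]; ring
          rw [e2]; ring
        have hc1 : (P * derivative (derivative S)).coeff (3 * m + 1)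
            = 1 * (((m : ℝ) + 1) * (m : ℝ)) := by
          have h := coeff_mul_add_eq_of_natDegree_le (le_of_eq hPdeg) hS''le
          have e : 2 * m + 2 + (m - 1) = 3 * m + 1 := by omega
          rw [e] at h
          rw [h, hPc, hS''c]
        constructor
        · refine le_trans (natDegree_sub_le _ _) (max_le ?_ hle2)
          refine le_trans natDegree_mul_le ?_
          have := hS''le
          omega
        · rw [hD, coeff_sub, hc1, hc2]; ring
    have hcne : D.coeff (3 * m + 1) ≠ 0 := by
      rw [hDfacts.2]
      have h1 : ((m : ℝ) + 1) * (m : ℝ) - (2 * (m : ℝ) + 2) * ((m : ℝ) + 1)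
          = -(((m : ℝ) + 1) * ((m : ℝ) + 2)) := by ring
      rw [h1, neg_ne_zero]
      positivity
    have hDne : D ≠ 0 := fun h => hcne (by simp [h])
    have hDdeg : D.natDegree = 3 * m + 1 :=
      le_antisymm hDfacts.1 (le_natDegree_of_ne_zero hcne)
    have hdm : S * (D /ₘ S) = D := by
      conv_rhs => rw [← modByMonic_add_div D S]
      rw [(modByMonic_eq_zero_iff_dvd hSm).2 hSdvd, zero_add]
    refine ⟨-(D /ₘ S), ?_, ?_, hskf⟩
    · have hq : D /ₘ S ≠ 0 := fun h => hDne (by rw [← hdm, h, mul_zero])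
      rw [degree_neg, degree_eq_natDegree hq, natDegree_divByMonic D hSm, hDdeg, hSdeg]
      exact congrArg (fun x : ℕ => (x : WithBot ℕ)) (by omega)
    · linear_combination -hdm
  · -- backward: Van Vleck data gives E = 0
    rintro ⟨R, hRdeg, hRid, hskf⟩
    have hsrel : ∀ k, s k * ((Sk k).eval (t k)) ^ 2 = a * P.eval (t k) := by
      intro k
      rw [hskf k, hpp k, div_mul_cancel₀ _ (hprodsqne k)]
    have hEk : ∀ k, E.IsRoot (t k) := by
      intro k
      show E.eval (t k) = 0
      rw [hEevk k]
      linarith [hsrel k]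
    have hE'k : ∀ k, (derivative E).IsRoot (t k) := by
      intro k
      have h2 : D.eval (t k) = 0 := by
        have h := congrArg (eval (t k)) hRid
        simp only [eval_add, eval_mul, eval_zero, hSev k, mul_zero, add_zero] at h
        exact h
      rw [hD] at h2
      simp only [eval_sub, eval_mul] at h2
      rw [hS''ev k, hS'ev k] at h2
      have h3 : a * (derivative P).eval (t k)
          = 2 * s k * (Sk k).eval (t k) * (derivative (Sk k)).eval (t k) := by
        apply mul_right_cancel₀ (hSkne k)
        linear_combination (-a) * h2 - (2 * (derivative (Sk k)).eval (t k)) * hsrel k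
      show (derivative E).eval (t k) = 0
      rw [hE'evk k]
      linarith
    have hdvd : S ^ 2 ∣ E := by
      have hsq : S ^ 2 = ∏ k, (X - C (t k)) ^ 2 := by
        rw [hS, ← Finset.prod_pow]
      rw [hsq]
      refine Finset.prod_dvd_of_coprime
        (fun i _ j hj hij => ((pairwise_coprime_X_sub_C hinj) hij).pow)
        fun k _ => sq_X_sub_C_dvd (hEk k) (hE'k k)
    by_contra hE0
    have h1 := Polynomial.natDegree_le_of_dvd hdvd hE0
    have hSS : (S ^ 2).natDegree = 2 * (m + 1) := by
      rw [natDegree_pow, hSdeg]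
    have hdeqP : P.degree = ((2 * m + 2 : ℕ) : WithBot ℕ) := by
      rw [degree_eq_natDegree hPm.ne_zero, hPdeg]
    have hdeqS : (S ^ 2).degree = ((2 * m + 2 : ℕ) : WithBot ℕ) := by
      rw [degree_eq_natDegree (hSm.pow 2).ne_zero, hSS]
      exact congrArg (fun x : ℕ => (x : WithBot ℕ)) (by omega)
    have hlt : (P - S ^ 2).degree < P.degree :=
      degree_sub_lt (hdeqP.trans hdeqS.symm) hPm.ne_zero
        (by rw [hPm.leadingCoeff, (hSm.pow 2).leadingCoeff])
    have hsub : (P - S ^ 2).natDegree ≤ 2 * m + 1 := by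
      by_cases hz : P - S ^ 2 = 0
      · simp [hz]
      · rw [hdeqP] at hlt
        have := (natDegree_lt_iff_degree_lt hz).2 hlt
        omega
    have hEeq : E = C a * (P - S ^ 2) - ∑ k, C (s k) * (Sk k) ^ 2 := by
      rw [hEdef]; ring
    have hEle : E.natDegree ≤ 2 * m + 1 := by
      rw [hEeq]
      refine le_trans (natDegree_sub_le _ _) (max_le ?_ ?_)
      · refine le_trans natDegree_mul_le ?_
        rw [natDegree_C, zero_add]
        exact hsub
      · refine natDegree_sum_le_of_forall_le _ _ fun k _ => ?_
        refine le_trans natDegree_mul_le ?_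
        rw [natDegree_C, zero_add, natDegree_pow, hSkdeg k]
        omega
    rw [hSS] at h1
    omega
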